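/- Let P be a Horn clause program and k ∈ ℕ. If S is a model of P^{≤k} and T is a model of LINEARIZE(P^{≤k+1}, S), then the interpretation U consisting of the indexed atoms of dimension index at most k that belong to S together with the indexed atoms of dimension index k+1 that belong to T is a model of P^{≤k+1}. -/
import Mathlib


/-- An indexed atom `a^{=d}` (when `isExact = true`) or `a^{≤d}` (when `isExact = false`),
where `d` is the dimension index. -/
structure IAtom (β : Type) where
  atom : β
  idx : ℕ
  isExact : Bool
deriving DecidableEq

/-- A (ground) Horn clause program over atoms `γ`: a set of clauses `(head, body)`. -/
abbrev Program (γ : Type) := Set (γ × List γ)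

/-- The at-most-`k`-dimension program `P^{≤k}`. -/
def kdim {β : Type} (P : Program β) (k : ℕ) : Program (IAtom β) :=
  { c |
    -- (i) fact clauses
    (∃ h, (h, ([] : List β)) ∈ P ∧ c = (⟨h, 0, true⟩, [])) ∨
    -- (ii) linear clauses
    (∃ h b d, (h, [b]) ∈ P ∧ d ≤ k ∧
      c = (⟨h, d, true⟩, [⟨b, d, true⟩])) ∨
    -- (iii) non-linear clauses, one body atom of exact dimension d
    (∃ h B d j, (h, B) ∈ P ∧ 1 < B.length ∧ 1 ≤ d ∧ d ≤ k ∧ j < B.length ∧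
      c = ((⟨h, d, true⟩ : IAtom β),
        B.mapIdx fun i b =>
          if i = j then (⟨b, d, true⟩ : IAtom β) else ⟨b, d - 1, false⟩)) ∨
    -- (iv) non-linear clauses, two body atoms of exact dimension d-1
    (∃ h B d, ∃ J : Finset ℕ, (h, B) ∈ P ∧ 1 < B.length ∧ 1 ≤ d ∧ d ≤ k ∧
      J.card = 2 ∧ (∀ i ∈ J, i < B.length) ∧ (2 ≤ d ∨ B.length = 2) ∧
      c = ((⟨h, d, true⟩ : IAtom β),
        B.mapIdx fun i b =>
          if i ∈ J then (⟨b, d - 1, true⟩ : IAtom β) else ⟨b, d - 2, false⟩)) ∨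
    -- (v) ε-clauses
    (∃ h d e, e ≤ d ∧ d ≤ k ∧
      c = ((⟨h, d, false⟩ : IAtom β), [(⟨h, e, true⟩ : IAtom β)])) }

/-- `LINEARIZE(Q, S)`: keep a clause iff every body atom of dimension index `≤ k`
belongs to `S`, deleting those body atoms from the kept clause. -/
def linearize {β : Type} (Q : Program (IAtom β)) (k : ℕ) (S : Set (IAtom β)) :
    Program (IAtom β) :=
  { c | ∃ c' ∈ Q, (∀ a ∈ c'.2, a.idx ≤ k → a ∈ S) ∧
        c = (c'.1, c'.2.filter fun a => decide (k < a.idx)) }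

/-- `M` is a model of the indexed program `Q` (`fbl` is the distinguished `false` symbol):
`M` contains no indexed atom of `false`, and for every clause, whenever every body atom
is in `M` then the head is in `M`. -/
def IsIModel {β : Type} (fbl : β) (Q : Program (IAtom β)) (M : Set (IAtom β)) : Prop :=
  (∀ a ∈ M, a.atom ≠ fbl) ∧ ∀ c ∈ Q, (∀ b ∈ c.2, b ∈ M) → c.1 ∈ M

lemma mem_mapIdx' {α β : Type*} {l : List α} {f : ℕ → α → β} {b : β}
    (hb : b ∈ l.mapIdx f) : ∃ i, ∃ h : i < l.length, b = f i (l.get ⟨i, h⟩) := by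
  rw [List.mapIdx_eq_ofFn, List.mem_ofFn] at hb
  obtain ⟨i, rfl⟩ := hb
  exact ⟨i, i.2, rfl⟩

/-- Every body atom of a clause of `P^{≤m}` has dimension index at most the head's. -/
lemma body_idx_le {β : Type} {P : Program β} {m : ℕ} {c : IAtom β × List (IAtom β)}
    (hc : c ∈ kdim P m) : ∀ b ∈ c.2, b.idx ≤ c.1.idx := by
  intro b hb
  rcases hc with ⟨h, _, rfl⟩ | ⟨h, b', d, _, _, rfl⟩ | ⟨h, B, d, j, _, _, _, _, _, rfl⟩
    | ⟨h, B, d, J, _, _, _, _, _, _, _, rfl⟩ | ⟨h, d, e, he, _, rfl⟩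
  · simp at hb
  · simp only [List.mem_singleton] at hb; subst hb; exact le_refl _
  · obtain ⟨i, hi, rfl⟩ := mem_mapIdx' hb
    dsimp only; split <;> simp
  · obtain ⟨i, hi, rfl⟩ := mem_mapIdx' hb
    dsimp only; split <;> simp
  · simp only [List.mem_singleton] at hb; subst hb; exact he

/-- A clause of `P^{≤m}` whose head has dimension index `≤ k` is a clause of `P^{≤k}`. -/
lemma mem_kdim_of_head_le {β : Type} {P : Program β} {m k : ℕ}
    {c : IAtom β × List (IAtom β)} (hc : c ∈ kdim P m) (hk : c.1.idx ≤ k) :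
    c ∈ kdim P k := by
  rcases hc with ⟨h, h1, rfl⟩ | ⟨h, b', d, h1, h2, rfl⟩ | ⟨h, B, d, j, h1, h2, h3, h4, h5, rfl⟩
    | ⟨h, B, d, J, h1, h2, h3, h4, h5, h6, h7, rfl⟩ | ⟨h, d, e, h1, h2, rfl⟩
  · exact Or.inl ⟨h, h1, rfl⟩
  · exact Or.inr (Or.inl ⟨h, b', d, h1, hk, rfl⟩)
  · exact Or.inr (Or.inr (Or.inl ⟨h, B, d, j, h1, h2, h3, hk, h5, rfl⟩))
  · exact Or.inr (Or.inr (Or.inr (Or.inl ⟨h, B, d, J, h1, h2, h3, hk, h5, h6, h7, rfl⟩)))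
  · exact Or.inr (Or.inr (Or.inr (Or.inr ⟨h, d, e, h1, hk, rfl⟩)))

/-- if `S` is a model of `P^{≤k}` and `T` a model of
`LINEARIZE(P^{≤k+1}, S)`, then the atoms of dimension index `≤ k` in `S` together with
the atoms of dimension index `k+1` in `T` form a model of `P^{≤k+1}`. -/
theorem model_of_kdim_succ {β : Type} (fbl : β) (P : Program β)
    (hP : ∀ c ∈ P, fbl ∉ c.2) (k : ℕ)
    (S T : Set (IAtom β))
    (hS : IsIModel fbl (kdim P k) S)
    (hT : IsIModel fbl (linearize (kdim P (k + 1)) k S) T) :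
    IsIModel fbl (kdim P (k + 1))
      ({a | a ∈ S ∧ a.idx ≤ k} ∪ {a | a ∈ T ∧ a.idx = k + 1}) := by
  constructor
  · rintro a (⟨ha, -⟩ | ⟨ha, -⟩)
    · exact hS.1 a ha
    · exact hT.1 a ha
  · intro c hc hbody
    -- every body atom of dimension index ≤ k lies in S
    have hbS : ∀ b ∈ c.2, b.idx ≤ k → b ∈ S := by
      intro b hb hble
      rcases hbody b hb with ⟨h1, -⟩ | ⟨-, h2⟩
      · exact h1
      · omega
    by_cases hd : c.1.idx ≤ k
    · -- head has dimension index ≤ k : use hS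
      have hck : c ∈ kdim P k := mem_kdim_of_head_le hc hd
      have : c.1 ∈ S := hS.2 c hck fun b hb =>
        hbS b hb ((body_idx_le hc b hb).trans hd)
      exact Or.inl ⟨this, hd⟩
    · -- head has dimension index k+1 : use hT on the linearized clause
      have hd1 : c.1.idx = k + 1 := by
        have : c.1.idx ≤ k + 1 := by
          rcases hc with ⟨h, -, rfl⟩ | ⟨h, b', d, -, h2, rfl⟩ | ⟨h, B, d, j, -, -, -, h4, -, rfl⟩
            | ⟨h, B, d, J, -, -, -, h4, -, -, -, rfl⟩ | ⟨h, d, e, -, h2, rfl⟩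
          · simp
          all_goals first | exact h2 | exact h4
        omega
      have hlin : (c.1, c.2.filter fun a => decide (k < a.idx)) ∈
          linearize (kdim P (k + 1)) k S := ⟨c, hc, hbS, rfl⟩
      have : c.1 ∈ T := by
        apply hT.2 _ hlin
        intro b hb
        simp only [List.mem_filter, decide_eq_true_eq] at hb
        rcases hbody b hb.1 with ⟨-, h2⟩ | ⟨h1, -⟩
        · omega
        · exact h1
      exact Or.inr ⟨this, hd1⟩
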